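/- Let n ≥ 3 be an integer and let F be a field such that every companion matrix C ∈ M_n(F) is nil-clean. Then F is isomorphic to the prime field F_p for some prime p with p < n; equivalently, F has prime characteristic p < n and every element of F is of the form k·1 for some non-negative integer k. -/

import Mathlib

/-- An element of a ring is *nil-clean* if it is the sum of an idempotent
and a nilpotent element. -/
def IsNilClean {R : Type*} [Ring R] (a : R) : Prop :=
  ∃ e n : R, e ^ 2 = e ∧ IsNilpotent n ∧ a = e + n

/-- The companion matrix `C_{c_0,...,c_{n-1}}`: entries `1` on the subdiagonal
(positions `(i+1, i)` for `1 ≤ i ≤ n-1`), last column `(-c_0, ..., -c_{n-1})ᵀ`,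
and `0` elsewhere. -/
def companionMatrix {R : Type*} [Ring R] (n : ℕ) (c : Fin n → R) :
    Matrix (Fin n) (Fin n) R :=
  Matrix.of fun i j =>
    if (i : ℕ) = (j : ℕ) + 1 then 1
    else if (j : ℕ) = n - 1 then -c i
    else 0

open Matrix Polynomial

section Helpers

variable {F : Type*} [Field F] {n : ℕ}

/-- Trace of the companion matrix. -/
lemma trace_companion (hn : 0 < n) (c : Fin n → F) :
    Matrix.trace (companionMatrix n c) = -c ⟨n - 1, by omega⟩ := by
  classical
  rw [Matrix.trace]
  rw [Finset.sum_eq_single (⟨n - 1, by omega⟩ : Fin n)]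
  · simp [Matrix.diag, companionMatrix]
  · intro i _ hi
    have : (i : ℕ) ≠ n - 1 := by
      intro hh; apply hi; ext; simpa using hh
    simp [Matrix.diag, companionMatrix, this]
  · simp

/-- A nilpotent matrix over a field has zero trace. -/
lemma trace_eq_zero_of_nilpotent {N : Matrix (Fin n) (Fin n) F} (hN : IsNilpotent N) :
    Matrix.trace N = 0 :=
  (Matrix.isNilpotent_trace_of_isNilpotent hN).eq_zero

/-- A nilpotent `n × n` matrix over a field satisfies `N ^ n = 0`. -/
lemma pow_card_eq_zero_of_nilpotent {N : Matrix (Fin n) (Fin n) F} (hN : IsNilpotent N) :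
    N ^ n = 0 := by
  have h1 : IsNilpotent (N.charpoly - X ^ Fintype.card (Fin n)) :=
    Matrix.isNilpotent_charpoly_sub_pow_of_isNilpotent hN
  have h2 : N.charpoly = X ^ n := by
    have := h1.eq_zero
    rw [sub_eq_zero] at this
    simpa using this
  have h3 := N.aeval_self_charpoly
  rw [h2] at h3
  simpa using h3

/-- Structure of idempotent matrices: trace is a natural number `r ≤ n`,
with `r = 0` iff zero and `r = n` iff identity. -/
lemma idempotent_trace {E : Matrix (Fin n) (Fin n) F} (hE : E ^ 2 = E) :
    ∃ r : ℕ, r ≤ n ∧ Matrix.trace E = (r : F) ∧ (r = 0 → E = 0) ∧ (r = n → E = 1) := by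
  classical
  set f : (Fin n → F) →ₗ[F] (Fin n → F) := Matrix.toLin' E with hf
  have hcomp : f ∘ₗ f = f := by
    rw [hf, ← Matrix.toLin'_mul, ← pow_two, hE]
  obtain ⟨p, hp⟩ := (LinearMap.isProj_iff_isIdempotentElem f).mpr hcomp
  have hple : p ≤ LinearMap.range f := by
    intro x hx
    exact ⟨x, hp.map_id x hx⟩
  have hrange : LinearMap.range f ≤ p := by
    rintro x ⟨y, rfl⟩
    exact hp.map_mem y
  have hpeq : p = LinearMap.range f := le_antisymm hple hrange
  refine ⟨Module.finrank F p, ?_, ?_, ?_, ?_⟩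
  · have := Submodule.finrank_le p
    simpa using this
  · have ht : LinearMap.trace F (Fin n → F) f = (Module.finrank F p : F) := hp.trace
    rw [← ht, LinearMap.trace_eq_matrix_trace F (Pi.basisFun F (Fin n))]
    congr 1
    rw [LinearMap.toMatrix_eq_toMatrix', hf, LinearMap.toMatrix'_toLin']
  · intro hr0
    have : p = ⊥ := by
      rwa [Submodule.finrank_eq_zero] at hr0
    have hfz : f = 0 := by
      rw [← LinearMap.range_eq_bot, ← hpeq, this]
    have := congrArg LinearMap.toMatrix' hfz
    rwa [hf, LinearMap.toMatrix'_toLin', LinearMap.toMatrix'.map_zero] at this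
  · intro hrn
    have htop : p = ⊤ := by
      apply Submodule.eq_top_of_finrank_eq
      rw [hrn]
      have : Module.finrank F (Fin n → F) = n := by
        rw [Module.finrank_pi]
        simp
      rw [this]
    have hid : f = LinearMap.id :=
      LinearMap.ext fun x => hp.map_id x (htop ▸ Submodule.mem_top)
    have := congrArg LinearMap.toMatrix' hid
    rwa [hf, LinearMap.toMatrix'_toLin', LinearMap.toMatrix'_id] at this

/-- Action of a companion matrix on standard basis vectors (non-last columns). -/
lemma companion_mulVec_single (c : Fin n → F) (j : Fin n) (hj : (j : ℕ) < n - 1) :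
    (companionMatrix n c) *ᵥ Pi.single j 1 = Pi.single (⟨(j : ℕ) + 1, by omega⟩ : Fin n) 1 := by
  classical
  have hjne : (j : ℕ) ≠ n - 1 := by omega
  ext i
  rw [Matrix.mulVec_single_one, Matrix.col_apply]
  simp only [companionMatrix, Matrix.of_apply, mul_one]
  by_cases hij : (i : ℕ) = (j : ℕ) + 1
  · have hieq : i = (⟨(j : ℕ) + 1, by omega⟩ : Fin n) := Fin.ext hij
    rw [if_pos hij, hieq, Pi.single_eq_same]
  · have hine : i ≠ (⟨(j : ℕ) + 1, by omega⟩ : Fin n) := by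
      intro hh; apply hij; rw [hh]
    rw [if_neg hij, if_neg hjne, Pi.single_eq_of_ne hine]

/-- Action of a companion matrix on the last standard basis vector. -/
lemma companion_mulVec_last (hn : 0 < n) (c : Fin n → F) :
    (companionMatrix n c) *ᵥ Pi.single (⟨n - 1, by omega⟩ : Fin n) 1 = fun i => -c i := by
  classical
  ext i
  rw [Matrix.mulVec_single]
  have : (i : ℕ) ≠ (n - 1) + 1 := by
    have := i.isLt; omega
  simp [companionMatrix, this]

/-- Powers of a companion matrix on the first basis vector. -/
lemma companion_pow_single (hn : 0 < n) (c : Fin n → F) (k : ℕ) (hk : k ≤ n - 1) :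
    (companionMatrix n c) ^ k *ᵥ Pi.single (⟨0, by omega⟩ : Fin n) 1
      = Pi.single (⟨k, by omega⟩ : Fin n) 1 := by
  induction k with
  | zero => rw [pow_zero, Matrix.one_mulVec]
  | succ m ih =>
    have hm : m ≤ n - 1 := by omega
    have hmlt : m < n - 1 := by omega
    rw [pow_succ', ← Matrix.mulVec_mulVec, ih hm,
      companion_mulVec_single c ⟨m, by omega⟩ (by simpa using hmlt)]

end Helpers

/-- If `n ≥ 3` and every `n × n` companion matrix over a field `F` is
nil-clean, then `F` is isomorphic to the prime field `𝔽_p` for some prime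
`p < n`. -/
theorem stmt_15 {F : Type*} [Field F] (n : ℕ) (hn : 3 ≤ n)
    (h : ∀ c : Fin n → F, IsNilClean (companionMatrix n c)) :
    ∃ p : ℕ, p.Prime ∧ p < n ∧ Nonempty (F ≃+* ZMod p) := by
  classical
  have hn0 : 0 < n := by omega
  -- Step 1: every element of `F` is `r • 1` for some `r ≤ n`.
  have key : ∀ a : F, ∃ r : ℕ, r ≤ n ∧ (r : F) = a := by
    intro a
    set c : Fin n → F := fun i => if (i : ℕ) = n - 1 then -a else 0 with hc
    obtain ⟨E, N, hE, hN, heq⟩ := h c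
    obtain ⟨r, hr, htr, _, _⟩ := idempotent_trace hE
    refine ⟨r, hr, ?_⟩
    have h1 : Matrix.trace (companionMatrix n c) = a := by
      rw [trace_companion hn0 c, hc]; simp
    rw [heq, Matrix.trace_add, htr, trace_eq_zero_of_nilpotent hN, add_zero] at h1
    exact h1
  -- Step 2: the characteristic is a prime `p ≤ n + 1`.
  set p := ringChar F with hpdef
  haveI : CharP F p := ringChar.charP F
  have hpprime : p.Prime := by
    rcases CharP.char_is_prime_or_zero F p with hp | hp
    · exact hp
    · exfalso
      haveI : CharP F 0 := hp ▸ ringChar.charP F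
      haveI : CharZero F := CharP.charP_to_charZero F
      obtain ⟨r, hr, hcast⟩ := key ((n + 1 : ℕ) : F)
      have : r = n + 1 := Nat.cast_injective hcast
      omega
  haveI : Fact p.Prime := ⟨hpprime⟩
  haveI : Nonempty (Fin n) := ⟨⟨0, hn0⟩⟩
  have hple : p ≤ n + 1 := by
    obtain ⟨r, hr, hcast⟩ := key (-1 : F)
    have h0 : ((r + 1 : ℕ) : F) = 0 := by push_cast; rw [hcast]; ring
    have hdvd : p ∣ r + 1 := (CharP.cast_eq_zero_iff F p _).mp h0
    have := Nat.le_of_dvd (by omega) hdvd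
    omega
  -- Step 3: exclude `p = n`.
  have hpn : p ≠ n := by
    intro hpeq
    set c : Fin n → F := fun i => if (i : ℕ) = 1 then 1 else 0 with hc
    set C := companionMatrix n c with hC
    obtain ⟨E, N, hE, hN, heq⟩ := h c
    obtain ⟨r, hr, htr, hr0, hrn⟩ := idempotent_trace hE
    have htrC : Matrix.trace C = 0 := by
      rw [hC, trace_companion hn0 c, hc]
      have : (n - 1 : ℕ) ≠ 1 := by omega
      simp [this]
    have hrF : (r : F) = 0 := by
      rw [hC, heq, Matrix.trace_add, htr, trace_eq_zero_of_nilpotent hN, add_zero] at htrC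
      exact htrC
    have hdvd : p ∣ r := (CharP.cast_eq_zero_iff F p _).mp hrF
    have hror : r = 0 ∨ r = n := by
      rcases Nat.eq_zero_or_pos r with h0 | h0
      · left; exact h0
      · right
        have := Nat.le_of_dvd h0 hdvd
        omega
    -- the key vector computation : C ^ n *ᵥ e₀ = -(e₁)
    have hCn : C ^ n *ᵥ Pi.single (⟨0, by omega⟩ : Fin n) 1
        = -(Pi.single (⟨1, by omega⟩ : Fin n) 1) := by
      have h1 : C ^ (n - 1) *ᵥ Pi.single (⟨0, by omega⟩ : Fin n) 1
          = Pi.single (⟨n - 1, by omega⟩ : Fin n) 1 := companion_pow_single hn0 c (n - 1) le_rfl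
      have h2 : C ^ n = C * C ^ (n - 1) := by
        rw [← pow_succ']; congr 1; omega
      rw [h2, ← Matrix.mulVec_mulVec, h1, hC, companion_mulVec_last hn0 c]
      ext i
      by_cases hi : i = (⟨1, by omega⟩ : Fin n)
      · subst hi; simp [hc]
      · have : (i : ℕ) ≠ 1 := by
          intro hh; apply hi; ext; simpa using hh
        simp [hc, this, Pi.single_eq_of_ne hi]
    rcases hror with hcase | hcase
    · -- E = 0, so C is nilpotent, so C ^ n = 0, contradiction
      have hE0 : E = 0 := hr0 hcase
      have hCnil : IsNilpotent C := by
        rw [hC, heq, hE0, zero_add]; exact hN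
      have := pow_card_eq_zero_of_nilpotent hCnil
      rw [this] at hCn
      have := congrFun hCn (⟨1, by omega⟩ : Fin n)
      simp at this
    · -- E = 1, so C - 1 is nilpotent, so C ^ p = 1
      have hE1 : E = 1 := hrn hcase
      have hNC : N = C - 1 := by rw [hC, heq, hE1]; abel
      have hnil : IsNilpotent (C + (-1 : Matrix (Fin n) (Fin n) F)) := by
        rw [← sub_eq_add_neg, ← hNC]; exact hN
      have hfresh : (C + (-1 : Matrix (Fin n) (Fin n) F)) ^ p = C ^ p + (-1) ^ p :=
        add_pow_char_of_commute p (Commute.neg_one_right C)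
      have hodd : Odd p := hpprime.odd_of_ne_two (by omega)
      have hzero : (C + (-1 : Matrix (Fin n) (Fin n) F)) ^ p = 0 := by
        have h1 := pow_card_eq_zero_of_nilpotent hnil
        rw [hpeq]; exact h1
      rw [hzero, hodd.neg_one_pow] at hfresh
      have hCp : C ^ p = 1 := by
        have h' := hfresh.symm
        rwa [add_neg_eq_zero] at h'
      rw [hpeq] at hCp
      rw [hCp] at hCn
      have := congrFun hCn (⟨0, by omega⟩ : Fin n)
      have h01 : (⟨0, by omega⟩ : Fin n) ≠ (⟨1, by omega⟩ : Fin n) := by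
        intro hh; simpa using congrArg (Fin.val) hh
      rw [Matrix.one_mulVec] at this
      rw [Pi.single_eq_same, Pi.neg_apply, Pi.single_eq_of_ne h01, neg_zero] at this
      exact one_ne_zero this
  -- Step 4: exclude `p = n + 1`.
  have hpn1 : p ≠ n + 1 := by
    intro hpeq
    set c : Fin n → F := fun i => if (i : ℕ) = n - 1 then 1 else 0 with hc
    set C := companionMatrix n c with hC
    obtain ⟨E, N, hE, hN, heq⟩ := h c
    obtain ⟨r, hr, htr, hr0, hrn⟩ := idempotent_trace hE
    have htrC : Matrix.trace C = -1 := by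
      rw [hC, trace_companion hn0 c, hc]; simp
    have hrF : (r : F) = -1 := by
      rw [hC, heq, Matrix.trace_add, htr, trace_eq_zero_of_nilpotent hN, add_zero] at htrC
      exact htrC
    have h0 : ((r + 1 : ℕ) : F) = 0 := by push_cast; rw [hrF]; ring
    have hdvd : p ∣ r + 1 := (CharP.cast_eq_zero_iff F p _).mp h0
    have hreq : r = n := by
      have := Nat.le_of_dvd (by omega) hdvd
      omega
    have hE1 : E = 1 := hrn hreq
    have hNC : N = C - 1 := by rw [hC, heq, hE1]; abel
    have hnil : IsNilpotent (C + (-1 : Matrix (Fin n) (Fin n) F)) := by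
      rw [← sub_eq_add_neg, ← hNC]; exact hN
    have hfresh : (C + (-1 : Matrix (Fin n) (Fin n) F)) ^ p = C ^ p + (-1) ^ p :=
      add_pow_char_of_commute p (Commute.neg_one_right C)
    have hodd : Odd p := hpprime.odd_of_ne_two (by omega)
    have hzero : (C + (-1 : Matrix (Fin n) (Fin n) F)) ^ p = 0 := by
      have h1 := pow_card_eq_zero_of_nilpotent hnil
      have : (C + (-1 : Matrix (Fin n) (Fin n) F)) ^ p
          = (C + (-1 : Matrix (Fin n) (Fin n) F)) ^ n * (C + (-1 : Matrix (Fin n) (Fin n) F)) := by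
        rw [hpeq, pow_succ]
      rw [this, h1, zero_mul]
    rw [hzero, hodd.neg_one_pow] at hfresh
    have hCp : C ^ p = 1 := by
      have h' := hfresh.symm
      rwa [add_neg_eq_zero] at h'
    -- but C ^ (n+1) *ᵥ e₀ = e_{n-1} ≠ e₀
    have h1 : C ^ (n - 1) *ᵥ Pi.single (⟨0, by omega⟩ : Fin n) 1
        = Pi.single (⟨n - 1, by omega⟩ : Fin n) 1 := companion_pow_single hn0 c (n - 1) le_rfl
    have hlastvec : C *ᵥ Pi.single (⟨n - 1, by omega⟩ : Fin n) 1
        = -(Pi.single (⟨n - 1, by omega⟩ : Fin n) 1) := by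
      rw [hC, companion_mulVec_last hn0 c]
      ext i
      by_cases hi : i = (⟨n - 1, by omega⟩ : Fin n)
      · subst hi; simp [hc]
      · have : (i : ℕ) ≠ n - 1 := by
          intro hh; apply hi; ext; simpa using hh
        simp [hc, this, Pi.single_eq_of_ne hi]
    have hCn1 : C ^ (n + 1) *ᵥ Pi.single (⟨0, by omega⟩ : Fin n) 1
        = Pi.single (⟨n - 1, by omega⟩ : Fin n) 1 := by
      have h2 : C ^ (n + 1) = C * (C * C ^ (n - 1)) := by
        rw [← pow_succ', ← pow_succ']; congr 1; omega
      rw [h2, ← Matrix.mulVec_mulVec, ← Matrix.mulVec_mulVec, h1, hlastvec,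
        Matrix.mulVec_neg, hlastvec, neg_neg]
    rw [hpeq] at hCp
    rw [hCp, Matrix.one_mulVec] at hCn1
    have := congrFun hCn1 (⟨0, by omega⟩ : Fin n)
    have h0n : (⟨0, by omega⟩ : Fin n) ≠ (⟨n - 1, by omega⟩ : Fin n) := by
      intro hh
      have := congrArg Fin.val hh
      simp at this; omega
    rw [Pi.single_eq_of_ne h0n] at this
    exact one_ne_zero this
  -- Step 5: conclude
  refine ⟨p, hpprime, by omega, ?_⟩
  have hbij : Function.Bijective (ZMod.castHom (dvd_refl p) F) := by
    constructor
    · exact (ZMod.castHom (dvd_refl p) F).injective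
    · intro a
      obtain ⟨r, _, hcast⟩ := key a
      exact ⟨(r : ZMod p), by rw [map_natCast]; exact hcast⟩
  exact ⟨(RingEquiv.ofBijective _ hbij).symm⟩
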